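/- Let (X,d) be a nonempty compact metric space admitting a conical geodesic bicombing. Then X admits a reversible conical geodesic bicombing σ that is Iso(X)-equivariant, i.e. f(σ(x,y,t)) = σ(f(x), f(y), t) for every surjective isometry f : X → X, all x, y ∈ X, and all t ∈ [0,1]. -/

import Mathlib

/-- A geodesic bicombing on a metric space `X`: a map `σ : X × X × [0,1] → X` such that
`σ x y 0 = x`, `σ x y 1 = y` and `dist (σ x y s) (σ x y t) = |s - t| * dist x y`
for all `s, t ∈ [0,1]`. -/
def IsGeodesicBicombing {X : Type*} [MetricSpace X] (σ : X → X → ℝ → X) : Prop :=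
  (∀ x y : X, σ x y 0 = x) ∧ (∀ x y : X, σ x y 1 = y) ∧
    ∀ x y : X, ∀ s ∈ Set.Icc (0:ℝ) 1, ∀ t ∈ Set.Icc (0:ℝ) 1,
      dist (σ x y s) (σ x y t) = |s - t| * dist x y

/-- A bicombing is conical if
`dist (σ x y t) (σ x' y' t) ≤ (1 - t) * dist x x' + t * dist y y'` for all `t ∈ [0,1]`. -/
def IsConical {X : Type*} [MetricSpace X] (σ : X → X → ℝ → X) : Prop :=
  ∀ x y x' y' : X, ∀ t ∈ Set.Icc (0:ℝ) 1,
    dist (σ x y t) (σ x' y' t) ≤ (1 - t) * dist x x' + t * dist y y'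

/-- A bicombing is reversible if `σ x y t = σ y x (1 - t)` for all `t ∈ [0,1]`. -/
def IsReversible {X : Type*} [MetricSpace X] (σ : X → X → ℝ → X) : Prop :=
  ∀ x y : X, ∀ t ∈ Set.Icc (0:ℝ) 1, σ x y t = σ y x (1 - t)

namespace Lemma45
set_option linter.unusedSectionVars false

open Set Metric BoundedContinuousFunction

/-- parameter domain -/
abbrev PT (X : Type*) := X × X × (Set.Icc (0:ℝ) 1)

/-- ambient space of candidate combings -/
abbrev BCF (X : Type*) [MetricSpace X] := BoundedContinuousFunction (PT X) X

noncomputable def i0 : Set.Icc (0:ℝ) 1 := ⟨0, Set.left_mem_Icc.2 zero_le_one⟩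
noncomputable def i1 : Set.Icc (0:ℝ) 1 := ⟨1, Set.right_mem_Icc.2 zero_le_one⟩
noncomputable def ih : Set.Icc (0:ℝ) 1 := ⟨1/2, by constructor <;> norm_num⟩
noncomputable def irev (t : Set.Icc (0:ℝ) 1) : Set.Icc (0:ℝ) 1 :=
  ⟨1 - t.1, by obtain ⟨t, ht0, ht1⟩ := t; constructor <;> simp <;> linarith⟩

variable {X : Type*} [MetricSpace X] [CompactSpace X] [Nonempty X]

/-- the conditions defining (the restriction to `[0,1]` of) a conical geodesic bicombing -/
def Ok (f : BCF X) : Prop :=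
  (∀ x y : X, f (x, y, i0) = x) ∧ (∀ x y : X, f (x, y, i1) = y) ∧
  (∀ x y : X, ∀ s t : Set.Icc (0:ℝ) 1,
      dist (f (x, y, s)) (f (x, y, t)) ≤ |s.1 - t.1| * dist x y) ∧
  (∀ x y x' y' : X, ∀ t : Set.Icc (0:ℝ) 1,
      dist (f (x, y, t)) (f (x', y', t)) ≤ (1 - t.1) * dist x x' + t.1 * dist y y')

noncomputable def CC (X : Type*) [MetricSpace X] [CompactSpace X] [Nonempty X] :
    Set (BCF X) := {f | Ok f}

lemma Ok.diag {f : BCF X} (hf : Ok f) (x : X) (t : Set.Icc (0:ℝ) 1) : f (x, x, t) = x := by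
  have h := hf.2.2.1 x x t i0
  simp only [dist_self, mul_zero] at h
  have := dist_le_zero.1 h
  rw [this, hf.1]

section ops

/-- midpoint operation -/
noncomputable def mop (f g : BCF X) : BCF X :=
  BoundedContinuousFunction.mkOfCompact
    ⟨fun p => f (f p, g p, ih), by
      exact f.continuous.comp (f.continuous.prodMk ((g.continuous).prodMk continuous_const))⟩

@[simp] lemma mop_apply (f g : BCF X) (p : PT X) : mop f g p = f (f p, g p, ih) := rfl

/-- reversal operation -/
noncomputable def rop (f : BCF X) : BCF X :=
  BoundedContinuousFunction.mkOfCompact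
    ⟨fun p => f (p.2.1, p.1, irev p.2.2), by
      refine f.continuous.comp ?_
      refine (continuous_fst.comp continuous_snd).prodMk (continuous_fst.prodMk ?_)
      exact Continuous.subtype_mk (continuous_const.sub
        (continuous_subtype_val.comp (continuous_snd.comp continuous_snd))) _⟩

@[simp] lemma rop_apply (f : BCF X) (p : PT X) : rop f p = f (p.2.1, p.1, irev p.2.2) := rfl

/-- conjugation by an isometric equivalence -/
noncomputable def top (e : X ≃ᵢ X) (f : BCF X) : BCF X :=
  BoundedContinuousFunction.mkOfCompact
    ⟨fun p => e.symm (f (e p.1, e p.2.1, p.2.2)), by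
      refine e.symm.continuous.comp (f.continuous.comp ?_)
      exact (e.continuous.comp continuous_fst).prodMk
        ((e.continuous.comp (continuous_fst.comp continuous_snd)).prodMk
          (continuous_snd.comp continuous_snd))⟩

@[simp] lemma top_apply (e : X ≃ᵢ X) (f : BCF X) (p : PT X) :
    top e f p = e.symm (f (e p.1, e p.2.1, p.2.2)) := rfl


lemma distX_le (a b : X) : dist a b ≤ diam (univ : Set X) :=
  dist_le_diam_of_mem isCompact_univ.isBounded trivial trivial

lemma bcf_dist_le_diam (f g : BCF X) : dist f g ≤ diam (univ : Set X) :=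
  (dist_le diam_nonneg).2 fun _ => distX_le _ _

lemma ih_val : (ih).1 = 1/2 := rfl

lemma mop_mem {f g : BCF X} (hf : Ok f) (hg : Ok g) : Ok (mop f g) := by
  refine ⟨fun x y => ?_, fun x y => ?_, fun x y s t => ?_, fun x y x' y' t => ?_⟩
  · rw [mop_apply]
    show f (f (x,y,i0), g (x,y,i0), ih) = x
    rw [hf.1, hg.1, hf.diag]
  · rw [mop_apply]
    show f (f (x,y,i1), g (x,y,i1), ih) = y
    rw [hf.2.1, hg.2.1, hf.diag]
  · rw [mop_apply, mop_apply]
    have h1 := hf.2.2.2 (f (x,y,s)) (g (x,y,s)) (f (x,y,t)) (g (x,y,t)) ih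
    have h2 := hf.2.2.1 x y s t
    have h3 := hg.2.2.1 x y s t
    rw [ih_val] at h1
    calc dist (f (f (x,y,s), g (x,y,s), ih)) (f (f (x,y,t), g (x,y,t), ih))
        ≤ (1 - 1/2) * dist (f (x,y,s)) (f (x,y,t)) + (1/2) * dist (g (x,y,s)) (g (x,y,t)) := h1
      _ ≤ (1 - 1/2) * (|s.1 - t.1| * dist x y) + (1/2) * (|s.1 - t.1| * dist x y) := by
          have hd : (0:ℝ) ≤ 1/2 := by norm_num
          gcongr <;> norm_num
      _ = |s.1 - t.1| * dist x y := by ring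
  · rw [mop_apply, mop_apply]
    have h1 := hf.2.2.2 (f (x,y,t)) (g (x,y,t)) (f (x',y',t)) (g (x',y',t)) ih
    have h2 := hf.2.2.2 x y x' y' t
    have h3 := hg.2.2.2 x y x' y' t
    rw [ih_val] at h1
    calc dist (f (f (x,y,t), g (x,y,t), ih)) (f (f (x',y',t), g (x',y',t), ih))
        ≤ (1 - 1/2) * dist (f (x,y,t)) (f (x',y',t))
            + (1/2) * dist (g (x,y,t)) (g (x',y',t)) := h1
      _ ≤ (1 - 1/2) * ((1 - t.1) * dist x x' + t.1 * dist y y')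
            + (1/2) * ((1 - t.1) * dist x x' + t.1 * dist y y') := by gcongr <;> norm_num
      _ = (1 - t.1) * dist x x' + t.1 * dist y y' := by ring

lemma mop_dist_le {f : BCF X} (hf : Ok f) (g ρ : BCF X) :
    dist (mop f g) ρ ≤ (dist f ρ + dist g ρ) / 2 := by
  have hnn : (0:ℝ) ≤ (dist f ρ + dist g ρ) / 2 := by positivity
  refine (dist_le hnn).2 fun p => ?_
  rw [mop_apply]
  have hdiag : ρ p = f (ρ p, ρ p, ih) := (hf.diag (ρ p) ih).symm
  calc dist (f (f p, g p, ih)) (ρ p) = dist (f (f p, g p, ih)) (f (ρ p, ρ p, ih)) := by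
        rw [← hdiag]
    _ ≤ (1 - (ih).1) * dist (f p) (ρ p) + (ih).1 * dist (g p) (ρ p) :=
        hf.2.2.2 (f p) (g p) (ρ p) (ρ p) ih
    _ = (dist (f p) (ρ p) + dist (g p) (ρ p)) / 2 := by rw [ih_val]; ring
    _ ≤ (dist f ρ + dist g ρ) / 2 := by
        have := dist_coe_le_dist (f := f) (g := ρ) p
        have := dist_coe_le_dist (f := g) (g := ρ) p
        linarith

lemma irev_irev (t : Set.Icc (0:ℝ) 1) : irev (irev t) = t := Subtype.ext (by simp [irev])

lemma irev_i0 : irev i0 = i1 := Subtype.ext (by simp [irev, i0, i1])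
lemma irev_i1 : irev i1 = i0 := Subtype.ext (by simp [irev, i0, i1])

lemma rop_mem {f : BCF X} (hf : Ok f) : Ok (rop f) := by
  refine ⟨fun x y => ?_, fun x y => ?_, fun x y s t => ?_, fun x y x' y' t => ?_⟩
  · show f (y, x, irev i0) = x
    rw [irev_i0, hf.2.1]
  · show f (y, x, irev i1) = y
    rw [irev_i1, hf.1]
  · show dist (f (y, x, irev s)) (f (y, x, irev t)) ≤ |s.1 - t.1| * dist x y
    calc dist (f (y, x, irev s)) (f (y, x, irev t))
        ≤ |(irev s).1 - (irev t).1| * dist y x := hf.2.2.1 y x (irev s) (irev t)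
      _ = |s.1 - t.1| * dist x y := by
          rw [dist_comm]
          congr 1
          show |(1 - s.1) - (1 - t.1)| = |s.1 - t.1|
          rw [show (1 - s.1) - (1 - t.1) = t.1 - s.1 by ring, abs_sub_comm]
  · show dist (f (y, x, irev t)) (f (y', x', irev t))
        ≤ (1 - t.1) * dist x x' + t.1 * dist y y'
    calc dist (f (y, x, irev t)) (f (y', x', irev t))
        ≤ (1 - (irev t).1) * dist y y' + (irev t).1 * dist x x' :=
          hf.2.2.2 y x y' x' (irev t)
      _ = (1 - t.1) * dist x x' + t.1 * dist y y' := by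
          show (1 - (1 - t.1)) * dist y y' + (1 - t.1) * dist x x' = _
          ring

lemma rop_rop (f : BCF X) : rop (rop f) = f := by
  ext p
  obtain ⟨x, y, t⟩ := p
  show f (x, y, irev (irev t)) = f (x, y, t)
  rw [irev_irev]

lemma rop_dist_le (f g : BCF X) : dist (rop f) (rop g) ≤ dist f g := by
  refine (dist_le dist_nonneg).2 fun p => ?_
  show dist (f (p.2.1, p.1, irev p.2.2)) (g (p.2.1, p.1, irev p.2.2)) ≤ dist f g
  exact dist_coe_le_dist _

lemma rop_dist (f g : BCF X) : dist (rop f) (rop g) = dist f g := by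
  refine le_antisymm (rop_dist_le f g) ?_
  have := rop_dist_le (rop f) (rop g)
  rwa [rop_rop, rop_rop] at this

lemma top_mem (e : X ≃ᵢ X) {f : BCF X} (hf : Ok f) : Ok (top e f) := by
  refine ⟨fun x y => ?_, fun x y => ?_, fun x y s t => ?_, fun x y x' y' t => ?_⟩
  · show e.symm (f (e x, e y, i0)) = x
    rw [hf.1, IsometryEquiv.symm_apply_apply]
  · show e.symm (f (e x, e y, i1)) = y
    rw [hf.2.1, IsometryEquiv.symm_apply_apply]
  · show dist (e.symm (f (e x, e y, s))) (e.symm (f (e x, e y, t))) ≤ |s.1 - t.1| * dist x y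
    rw [e.symm.dist_eq]
    have := hf.2.2.1 (e x) (e y) s t
    rwa [e.dist_eq] at this
  · show dist (e.symm (f (e x, e y, t))) (e.symm (f (e x', e y', t)))
        ≤ (1 - t.1) * dist x x' + t.1 * dist y y'
    rw [e.symm.dist_eq]
    have := hf.2.2.2 (e x) (e y) (e x') (e y') t
    rwa [e.dist_eq, e.dist_eq] at this

lemma top_top (e : X ≃ᵢ X) (f : BCF X) : top e (top e.symm f) = f := by
  ext p
  obtain ⟨x, y, t⟩ := p
  show e.symm (e.symm.symm (f (e.symm (e x), e.symm (e y), t))) = f (x, y, t)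
  simp

lemma top_dist_le (e : X ≃ᵢ X) (f g : BCF X) : dist (top e f) (top e g) ≤ dist f g := by
  refine (dist_le dist_nonneg).2 fun p => ?_
  show dist (e.symm (f _)) (e.symm (g _)) ≤ dist f g
  rw [e.symm.dist_eq]
  exact dist_coe_le_dist _

lemma top_dist (e : X ≃ᵢ X) (f g : BCF X) : dist (top e f) (top e g) = dist f g := by
  refine le_antisymm (top_dist_le e f g) ?_
  have h := top_dist_le e.symm (top e f) (top e g)
  have h1 : top e.symm (top e f) = f := by
    have := top_top e.symm f
    rwa [IsometryEquiv.symm_symm] at this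
  have h2 : top e.symm (top e g) = g := by
    have := top_top e.symm g
    rwa [IsometryEquiv.symm_symm] at this
  rwa [h1, h2] at h

end ops

section compactness

lemma dist_pt_le {f : PT X → X}
    (hlip : ∀ x y : X, ∀ s t : Set.Icc (0:ℝ) 1,
      dist (f (x, y, s)) (f (x, y, t)) ≤ |s.1 - t.1| * dist x y)
    (hcon : ∀ x y x' y' : X, ∀ t : Set.Icc (0:ℝ) 1,
      dist (f (x, y, t)) (f (x', y', t)) ≤ (1 - t.1) * dist x x' + t.1 * dist y y')
    (p q : PT X) : dist (f p) (f q) ≤ (diam (univ : Set X) + 2) * dist p q := by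
  obtain ⟨x, y, s⟩ := p
  obtain ⟨x', y', t⟩ := q
  have hD1 : dist x x' ≤ dist ((x,y,s) : PT X) ((x',y',t) : PT X) := by
    rw [Prod.dist_eq]; exact le_max_left _ _
  have hD2 : dist y y' ≤ dist ((x,y,s) : PT X) ((x',y',t) : PT X) := by
    rw [Prod.dist_eq, Prod.dist_eq]
    exact le_trans (le_max_left _ _) (le_max_right _ _)
  have hD3 : |s.1 - t.1| ≤ dist ((x,y,s) : PT X) ((x',y',t) : PT X) := by
    rw [Prod.dist_eq, Prod.dist_eq]
    refine le_trans ?_ (le_trans (le_max_right _ _) (le_max_right _ _))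
    rw [Subtype.dist_eq, Real.dist_eq]
  have ht0 : (0:ℝ) ≤ t.1 := t.2.1
  have ht1 : t.1 ≤ 1 := t.2.2
  have hxy : dist x y ≤ diam (univ : Set X) := distX_le x y
  have habs : (0:ℝ) ≤ |s.1 - t.1| := abs_nonneg _
  have hdd : (0:ℝ) ≤ dist ((x,y,s) : PT X) ((x',y',t) : PT X) := dist_nonneg
  calc dist (f (x,y,s)) (f (x',y',t))
      ≤ dist (f (x,y,s)) (f (x,y,t)) + dist (f (x,y,t)) (f (x',y',t)) := dist_triangle _ _ _
    _ ≤ |s.1 - t.1| * dist x y + ((1 - t.1) * dist x x' + t.1 * dist y y') := by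
        gcongr
        · exact hlip x y s t
        · exact hcon x y x' y' t
    _ ≤ dist ((x,y,s) : PT X) ((x',y',t) : PT X) * diam (univ : Set X)
        + ((1 - t.1) * dist ((x,y,s) : PT X) ((x',y',t) : PT X)
          + t.1 * dist ((x,y,s) : PT X) ((x',y',t) : PT X)) := by
        have m1 : |s.1 - t.1| * dist x y
            ≤ dist ((x,y,s) : PT X) ((x',y',t) : PT X) * diam (univ : Set X) :=
          mul_le_mul hD3 hxy dist_nonneg hdd
        have m2 : (1 - t.1) * dist x x'
            ≤ (1 - t.1) * dist ((x,y,s) : PT X) ((x',y',t) : PT X) :=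
          mul_le_mul_of_nonneg_left hD1 (by linarith)
        have m3 : t.1 * dist y y' ≤ t.1 * dist ((x,y,s) : PT X) ((x',y',t) : PT X) :=
          mul_le_mul_of_nonneg_left hD2 ht0
        linarith
    _ = (diam (univ : Set X) + 2) * dist ((x,y,s) : PT X) ((x',y',t) : PT X) - 
        dist ((x,y,s) : PT X) ((x',y',t) : PT X) := by ring
    _ ≤ (diam (univ : Set X) + 2) * dist ((x,y,s) : PT X) ((x',y',t) : PT X) := by linarith

lemma isClosed_CC : IsClosed (CC X) := by
  have hrw : CC X =
      {f : BCF X | ∀ x y : X, f (x, y, i0) = x} ∩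
      ({f : BCF X | ∀ x y : X, f (x, y, i1) = y} ∩
      ({f : BCF X | ∀ x y : X, ∀ s t : Set.Icc (0:ℝ) 1,
          dist (f (x, y, s)) (f (x, y, t)) ≤ |s.1 - t.1| * dist x y} ∩
       {f : BCF X | ∀ x y x' y' : X, ∀ t : Set.Icc (0:ℝ) 1,
          dist (f (x, y, t)) (f (x', y', t)) ≤ (1 - t.1) * dist x x' + t.1 * dist y y'})) := rfl
  rw [hrw]
  refine IsClosed.inter ?_ (IsClosed.inter ?_ (IsClosed.inter ?_ ?_))
  · rw [setOf_forall]
    refine isClosed_iInter fun x => ?_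
    rw [setOf_forall]
    exact isClosed_iInter fun y => isClosed_eq (continuous_eval_const _) continuous_const
  · rw [setOf_forall]
    refine isClosed_iInter fun x => ?_
    rw [setOf_forall]
    exact isClosed_iInter fun y => isClosed_eq (continuous_eval_const _) continuous_const
  · rw [setOf_forall]
    refine isClosed_iInter fun x => ?_
    rw [setOf_forall]
    refine isClosed_iInter fun y => ?_
    rw [setOf_forall]
    refine isClosed_iInter fun s => ?_
    rw [setOf_forall]
    refine isClosed_iInter fun t => ?_
    exact isClosed_le (Continuous.dist (continuous_eval_const _) (continuous_eval_const _))
      continuous_const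
  · rw [setOf_forall]
    refine isClosed_iInter fun x => ?_
    rw [setOf_forall]
    refine isClosed_iInter fun y => ?_
    rw [setOf_forall]
    refine isClosed_iInter fun x' => ?_
    rw [setOf_forall]
    refine isClosed_iInter fun y' => ?_
    rw [setOf_forall]
    refine isClosed_iInter fun t => ?_
    exact isClosed_le (Continuous.dist (continuous_eval_const _) (continuous_eval_const _))
      continuous_const

lemma equicontinuous_CC : Equicontinuous ((↑) : CC X → PT X → X) := by
  refine Metric.equicontinuous_of_continuity_modulus
    (fun r => (diam (univ : Set X) + 2) * r) ?_ _ ?_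
  · have : Filter.Tendsto (fun r : ℝ => (diam (univ : Set X) + 2) * r)
        (nhds 0) (nhds ((diam (univ : Set X) + 2) * 0)) :=
      Filter.Tendsto.const_mul _ Filter.tendsto_id
    simpa using this
  · intro p q f
    exact dist_pt_le f.2.2.2.1 f.2.2.2.2 p q

lemma isCompact_CC : IsCompact (CC X) :=
  arzela_ascoli₂ univ isCompact_univ (CC X) isClosed_CC (fun _ x _ => mem_univ _)
    equicontinuous_CC

lemma nonempty_CC (h : ∃ σ : X → X → ℝ → X, IsGeodesicBicombing σ ∧ IsConical σ) :
    (CC X).Nonempty := by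
  obtain ⟨σ, h1, h2⟩ := h
  have hlip : ∀ x y : X, ∀ s t : Set.Icc (0:ℝ) 1,
      dist (σ x y s.1) (σ x y t.1) ≤ |s.1 - t.1| * dist x y := fun x y s t =>
    le_of_eq (h1.2.2 x y s.1 s.2 t.1 t.2)
  have hcon : ∀ x y x' y' : X, ∀ t : Set.Icc (0:ℝ) 1,
      dist (σ x y t.1) (σ x' y' t.1) ≤ (1 - t.1) * dist x x' + t.1 * dist y y' :=
    fun x y x' y' t => h2 x y x' y' t.1 t.2
  have hcont : Continuous (fun p : PT X => σ p.1 p.2.1 p.2.2.1) := by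
    have hnn : (0:ℝ) ≤ diam (univ : Set X) + 2 :=
      add_nonneg diam_nonneg (by norm_num)
    have hlips : LipschitzWith (Real.toNNReal (diam (univ : Set X) + 2))
        (fun p : PT X => σ p.1 p.2.1 p.2.2.1) := by
      refine LipschitzWith.of_dist_le_mul fun p q => ?_
      rw [Real.coe_toNNReal _ hnn]
      exact dist_pt_le (f := fun p : PT X => σ p.1 p.2.1 p.2.2.1) hlip hcon p q
    exact hlips.continuous
  refine ⟨BoundedContinuousFunction.mkOfCompact ⟨fun p => σ p.1 p.2.1 p.2.2.1, hcont⟩,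
    ?_, ?_, ?_, ?_⟩
  · intro x y
    exact h1.1 x y
  · intro x y
    exact h1.2.1 x y
  · intro x y s t
    exact hlip x y s t
  · intro x y x' y' t
    exact hcon x y x' y' t

end compactness

section main

/-- invariant families of combings -/
def Good (S : Set (BCF X)) : Prop :=
  S ⊆ CC X ∧ S.Nonempty ∧ IsClosed S ∧
  (∀ f ∈ S, ∀ g ∈ S, mop f g ∈ S) ∧ (∀ f ∈ S, rop f ∈ S) ∧
  (∀ e : X ≃ᵢ X, ∀ f ∈ S, top e f ∈ S)

lemma good_CC (h : ∃ σ : X → X → ℝ → X, IsGeodesicBicombing σ ∧ IsConical σ) :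
    Good (CC X) :=
  ⟨subset_rfl, nonempty_CC h, isClosed_CC, fun _ hf _ hg => mop_mem hf hg,
    fun _ hf => rop_mem hf, fun e _ hf => top_mem e hf⟩

lemma exists_minimal_good (h : ∃ σ : X → X → ℝ → X, IsGeodesicBicombing σ ∧ IsConical σ) :
    ∃ S : Set (BCF X), Minimal Good S := by
  have hz := zorn_superset_nonempty {S : Set (BCF X) | Good S} ?_ (CC X) (good_CC h)
  · obtain ⟨m, -, hm⟩ := hz
    exact ⟨m, hm⟩
  · intro c hcsub hchain hcne
    refine ⟨⋂₀ c, ?_, fun s hs => sInter_subset_of_mem hs⟩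
    obtain ⟨S₀, hS₀⟩ := hcne
    haveI : Nonempty c := ⟨⟨S₀, hS₀⟩⟩
    have hinter : (⋂₀ c).Nonempty := by
      rw [sInter_eq_iInter]
      refine IsCompact.nonempty_iInter_of_directed_nonempty_isCompact_isClosed
        (fun i : c => (i : Set (BCF X))) ?_ (fun i => (hcsub i.2).2.1)
        (fun i => IsCompact.of_isClosed_subset isCompact_CC (hcsub i.2).2.2.1 (hcsub i.2).1)
        (fun i => (hcsub i.2).2.2.1)
      intro i j
      rcases hchain.total i.2 j.2 with hij | hji
      · exact ⟨i, subset_rfl, hij⟩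
      · exact ⟨j, hji, subset_rfl⟩
    refine ⟨?_, hinter, ?_, ?_, ?_, ?_⟩
    · exact (sInter_subset_of_mem hS₀).trans (hcsub hS₀).1
    · exact isClosed_sInter fun S hS => (hcsub hS).2.2.1
    · intro f hf g hg T hT
      exact (hcsub hT).2.2.2.1 f (hf T hT) g (hg T hT)
    · intro f hf T hT
      exact (hcsub hT).2.2.2.2.1 f (hf T hT)
    · intro e f hf T hT
      exact (hcsub hT).2.2.2.2.2 e f (hf T hT)

/-- Chebyshev radius of `S` seen from `c` -/
noncomputable def radius (S : Set (BCF X)) (c : BCF X) : ℝ :=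
  sSup ((fun ρ => dist c ρ) '' S)

lemma bddAbove_radSet (S : Set (BCF X)) (c : BCF X) :
    BddAbove ((fun ρ => dist c ρ) '' S) := by
  refine ⟨diam (univ : Set X), ?_⟩
  rintro - ⟨ρ, -, rfl⟩
  exact bcf_dist_le_diam c ρ

lemma dist_le_radius {S : Set (BCF X)} {c ρ : BCF X} (hρ : ρ ∈ S) :
    dist c ρ ≤ radius S c :=
  le_csSup (bddAbove_radSet S c) ⟨ρ, hρ, rfl⟩

lemma radius_le {S : Set (BCF X)} (hne : S.Nonempty) {c : BCF X} {r : ℝ}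
    (h : ∀ ρ ∈ S, dist c ρ ≤ r) : radius S c ≤ r := by
  refine csSup_le (hne.image _) ?_
  rintro - ⟨ρ, hρ, rfl⟩
  exact h ρ hρ

lemma radius_nonneg {S : Set (BCF X)} {c : BCF X} (hc : c ∈ S) : 0 ≤ radius S c := by
  have := dist_le_radius (c := c) hc
  simpa using this

lemma radius_le_add {S : Set (BCF X)} (hne : S.Nonempty) (c c' : BCF X) :
    radius S c ≤ dist c c' + radius S c' := by
  refine radius_le hne fun ρ hρ => ?_
  have h1 := dist_triangle c c' ρ
  have h2 := dist_le_radius (c := c') hρ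
  linarith

lemma continuous_radius {S : Set (BCF X)} (hne : S.Nonempty) : Continuous (radius S) := by
  have : LipschitzWith 1 (radius S) := by
    refine LipschitzWith.of_dist_le_mul fun c c' => ?_
    rw [NNReal.coe_one, one_mul, Real.dist_eq, abs_sub_le_iff]
    constructor
    · have := radius_le_add hne c c'
      linarith
    · have := radius_le_add hne c' c
      rw [dist_comm] at this
      linarith
  exact this.continuous

def finL (k : ℕ) (i : Fin (2^k)) : Fin (2^(k+1)) :=
  ⟨i.1, by
    have h1 := i.2
    have h2 : 2^(k+1) = 2^k + 2^k := by rw [pow_succ]; ring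
    omega⟩

def finR (k : ℕ) (i : Fin (2^k)) : Fin (2^(k+1)) :=
  ⟨2^k + i.1, by
    have h1 := i.2
    have h2 : 2^(k+1) = 2^k + 2^k := by rw [pow_succ]; ring
    omega⟩

/-- balanced dyadic averages -/
noncomputable def avg : (k : ℕ) → (Fin (2^k) → BCF X) → BCF X
  | 0, x => x 0
  | (k+1), x => mop (avg k fun i => x (finL k i)) (avg k fun i => x (finR k i))

lemma avg_mem_CC : ∀ (k : ℕ) (x : Fin (2^k) → BCF X), (∀ i, x i ∈ CC X) → avg k x ∈ CC X
  | 0, _, hx => hx 0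
  | (k+1), _, hx =>
      mop_mem (avg_mem_CC k _ fun i => hx _) (avg_mem_CC k _ fun i => hx _)

lemma avg_mem {S : Set (BCF X)} (hmop : ∀ f ∈ S, ∀ g ∈ S, mop f g ∈ S) :
    ∀ (k : ℕ) (x : Fin (2^k) → BCF X), (∀ i, x i ∈ S) → avg k x ∈ S
  | 0, _, hx => hx 0
  | (k+1), _, hx =>
      hmop _ (avg_mem hmop k _ fun i => hx _) _ (avg_mem hmop k _ fun i => hx _)

lemma avg_dist_le_of_le : ∀ (k : ℕ) (x : Fin (2^k) → BCF X), (∀ i, x i ∈ CC X) →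
    ∀ (ρ : BCF X) (B : ℝ), (∀ i, dist (x i) ρ ≤ B) → dist (avg k x) ρ ≤ B
  | 0, _, _, _, _, hB => hB 0
  | (k+1), x, hx, ρ, B, hB => by
    have hA := avg_dist_le_of_le k (fun i => x (finL k i)) (fun i => hx _) ρ B (fun i => hB _)
    have hBr := avg_dist_le_of_le k (fun i => x (finR k i)) (fun i => hx _) ρ B (fun i => hB _)
    have hm := mop_dist_le (avg_mem_CC k (fun i => x (finL k i)) fun i => hx _)
      (avg k fun i => x (finR k i)) ρ
    have hrw : avg (k+1) x = mop (avg k fun i => x (finL k i)) (avg k fun i => x (finR k i)) :=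
      rfl
    rw [hrw]
    refine le_trans hm ?_
    linarith

lemma avg_dist_le : ∀ (k : ℕ) (x : Fin (2^k) → BCF X), (∀ i, x i ∈ CC X) →
    ∀ (ρ : BCF X) (B : ℝ), (∀ i, dist (x i) ρ ≤ B) → ∀ j : Fin (2^k),
    dist (avg k x) ρ ≤ (dist (x j) ρ + ((2:ℝ)^k - 1) * B) / 2^k
  | 0, x, _, ρ, B, hB, j => by
    haveI : Subsingleton (Fin (2^0)) := by
      rw [pow_zero]
      infer_instance
    have hj : j = 0 := Subsingleton.elim _ _
    subst hj
    show dist (x 0) ρ ≤ (dist (x 0) ρ + ((2:ℝ)^0 - 1) * B) / 2^0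
    norm_num
  | (k+1), x, hx, ρ, B, hB, j => by
    have hpow : (0:ℝ) < 2^k := by positivity
    have hBnn : 0 ≤ B := le_trans dist_nonneg (hB j)
    have hm : dist (avg (k+1) x) ρ ≤
        (dist (avg k fun i => x (finL k i)) ρ + dist (avg k fun i => x (finR k i)) ρ) / 2 :=
      mop_dist_le (avg_mem_CC k (fun i => x (finL k i)) fun i => hx _) _ ρ
    rw [show ((2:ℝ)^(k+1)) = 2 * 2^k by rw [pow_succ]; ring]
    by_cases hjk : j.1 < 2^k
    · have hIH := avg_dist_le k (fun i => x (finL k i)) (fun i => hx _) ρ B (fun i => hB _)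
        ⟨j.1, hjk⟩
      have hR := avg_dist_le_of_le k (fun i => x (finR k i)) (fun i => hx _) ρ B (fun i => hB _)
      have hxlj : x (finL k ⟨j.1, hjk⟩) = x j := congrArg x (Fin.ext rfl)
      rw [hxlj] at hIH
      have hIH' : dist (avg k fun i => x (finL k i)) ρ * 2^k
          ≤ dist (x j) ρ + ((2:ℝ)^k - 1) * B := (le_div_iff₀ hpow).1 hIH
      have hR' : 2^k * dist (avg k fun i => x (finR k i)) ρ ≤ 2^k * B :=
        mul_le_mul_of_nonneg_left hR (le_of_lt hpow)
      refine le_trans hm ?_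
      rw [div_le_div_iff₀ (by norm_num) (by positivity)]
      nlinarith
    · have hjk' : j.1 - 2^k < 2^k := by
        have h1 := j.2
        have h2 : 2^(k+1) = 2^k + 2^k := by rw [pow_succ]; ring
        omega
      have hIH := avg_dist_le k (fun i => x (finR k i)) (fun i => hx _) ρ B (fun i => hB _)
        ⟨j.1 - 2^k, hjk'⟩
      have hL := avg_dist_le_of_le k (fun i => x (finL k i)) (fun i => hx _) ρ B (fun i => hB _)
      have hfr : finR k ⟨j.1 - 2^k, hjk'⟩ = j := by
        refine Fin.ext ?_
        show 2^k + (j.1 - 2^k) = j.1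
        omega
      rw [hfr] at hIH
      have hIH' : dist (avg k fun i => x (finR k i)) ρ * 2^k
          ≤ dist (x j) ρ + ((2:ℝ)^k - 1) * B := (le_div_iff₀ hpow).1 hIH
      have hL' : 2^k * dist (avg k fun i => x (finL k i)) ρ ≤ 2^k * B :=
        mul_le_mul_of_nonneg_left hL (le_of_lt hpow)
      refine le_trans hm ?_
      rw [div_le_div_iff₀ (by norm_num) (by positivity)]
      nlinarith

lemma exists_separated {S : Set (BCF X)} (hsub : S ⊆ CC X)
    (hmop : ∀ f ∈ S, ∀ g ∈ S, mop f g ∈ S) (hne : S.Nonempty)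
    {R : ℝ} (hR : 0 < R) (hrad : ∀ c ∈ S, radius S c = R) :
    ∀ n : ℕ, ∃ x : Fin n → BCF X, (∀ i, x i ∈ S) ∧
      ∀ i j : Fin n, i ≠ j → R / 2 ≤ dist (x i) (x j) := by
  intro n
  induction n with
  | zero => exact ⟨fun i => i.elim0, fun i => i.elim0, fun i => i.elim0⟩
  | succ n ih =>
    obtain ⟨x, hxS, hxsep⟩ := ih
    rcases Nat.eq_zero_or_pos n with hn | hn
    · subst hn
      obtain ⟨s₀, hs₀⟩ := hne
      refine ⟨fun _ => s₀, fun _ => hs₀, fun i j hij => absurd ?_ hij⟩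
      exact (Fin.fin_one_eq_zero i).trans (Fin.fin_one_eq_zero j).symm
    · have hnlt : n < 2^n := Nat.lt_two_pow_self
      set y : Fin (2^n) → BCF X := fun i => x ⟨i.1 % n, Nat.mod_lt _ hn⟩ with hy
      have hyS : ∀ i, y i ∈ S := fun i => hxS _
      have hyCC : ∀ i, y i ∈ CC X := fun i => hsub (hyS i)
      have hcS : avg n y ∈ S := avg_mem hmop n y hyS
      have hcr : radius S (avg n y) = R := hrad _ hcS
      have hpow : (0:ℝ) < 2^n := by positivity
      set ε : ℝ := R / (2 * 2^n) with hε
      have hεpos : 0 < ε := by positivity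
      have hlt : R - ε < radius S (avg n y) := by
        rw [hcr]
        linarith
      obtain ⟨r, ⟨z, hzS, rfl⟩, hrlt⟩ := exists_lt_of_lt_csSup (hne.image _) hlt
      have hrlt' : R - ε < dist (avg n y) z := hrlt
      have hzdist : ∀ j : Fin n, R / 2 ≤ dist (x j) z := by
        intro j
        have hjlt : j.1 < 2^n := lt_trans j.2 hnlt
        have hyj : y ⟨j.1, hjlt⟩ = x j := congrArg x (Fin.ext (Nat.mod_eq_of_lt j.2))
        have hBz : ∀ i, dist (y i) z ≤ R := by
          intro i
          have hd := dist_le_radius (c := y i) hzS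
          rw [hrad _ (hyS i)] at hd
          exact hd
        have havg := avg_dist_le n y hyCC z R hBz ⟨j.1, hjlt⟩
        rw [hyj] at havg
        have h1 : (R - ε) * 2^n < dist (x j) z + ((2:ℝ)^n - 1) * R :=
          (lt_div_iff₀ hpow).1 (lt_of_lt_of_le hrlt' havg)
        have h2 : (R - ε) * 2^n = 2^n * R - R/2 := by
          rw [hε]
          field_simp
        rw [h2] at h1
        linarith
      refine ⟨fun i => if h : i.1 < n then x ⟨i.1, h⟩ else z, ?_, ?_⟩
      · intro i
        by_cases h : i.1 < n <;> simp [h, hxS, hzS]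
      · intro i j hij
        by_cases hi : i.1 < n <;> by_cases hj : j.1 < n
        · simp only [hi, hj, dif_pos]
          refine hxsep _ _ ?_
          intro he
          have hv := congrArg Fin.val he
          exact hij (Fin.ext hv)
        · simp only [hi, hj, dif_pos, dif_neg, not_false_iff]
          exact hzdist _
        · simp only [hi, hj, dif_pos, dif_neg, not_false_iff]
          rw [dist_comm]
          exact hzdist _
        · have hi2 := i.2
          have hj2 := j.2
          exact absurd (Fin.ext (by omega)) hij

lemma exists_invariant_point (h : ∃ σ : X → X → ℝ → X, IsGeodesicBicombing σ ∧ IsConical σ) :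
    ∃ c : BCF X, c ∈ CC X ∧ rop c = c ∧ ∀ e : X ≃ᵢ X, top e c = c := by
  obtain ⟨S, hmin⟩ := exists_minimal_good h
  obtain ⟨hsub, hne, hclosed, hmop, hrop, htop⟩ := hmin.1
  have hScompact : IsCompact S := IsCompact.of_isClosed_subset isCompact_CC hclosed hsub
  obtain ⟨c₀, hc₀S, hc₀min⟩ :=
    hScompact.exists_isMinOn hne (continuous_radius hne).continuousOn
  set R := radius S c₀ with hRdef
  have hS'good : Good {c | c ∈ S ∧ radius S c ≤ R} := by
    refine ⟨fun c hc => hsub hc.1, ⟨c₀, hc₀S, le_refl R⟩, ?_, ?_, ?_, ?_⟩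
    · have hrw : {c : BCF X | c ∈ S ∧ radius S c ≤ R} = S ∩ {c | radius S c ≤ R} := rfl
      rw [hrw]
      exact hclosed.inter (isClosed_le (continuous_radius hne) continuous_const)
    · rintro f ⟨hfS, hf⟩ g ⟨hgS, hg⟩
      refine ⟨hmop f hfS g hgS, radius_le hne fun ρ hρ => ?_⟩
      have hmd := mop_dist_le (hsub hfS) g ρ
      have h1 := dist_le_radius (c := f) hρ
      have h2 := dist_le_radius (c := g) hρ
      linarith
    · rintro f ⟨hfS, hf⟩
      refine ⟨hrop f hfS, radius_le hne fun ρ hρ => ?_⟩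
      have hd : dist (rop f) ρ = dist f (rop ρ) := by
        conv_lhs => rw [← rop_rop ρ]
        exact rop_dist f (rop ρ)
      rw [hd]
      exact le_trans (dist_le_radius (hrop ρ hρ)) hf
    · rintro e f ⟨hfS, hf⟩
      refine ⟨htop e f hfS, radius_le hne fun ρ hρ => ?_⟩
      have hd : dist (top e f) ρ = dist f (top e.symm ρ) := by
        conv_lhs => rw [← top_top e ρ]
        exact top_dist e f (top e.symm ρ)
      rw [hd]
      exact le_trans (dist_le_radius (htop e.symm ρ hρ)) hf
  have hSeq : S ⊆ {c | c ∈ S ∧ radius S c ≤ R} :=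
    hmin.2 hS'good (fun c hc => hc.1)
  have hrad : ∀ c ∈ S, radius S c = R := fun c hc =>
    le_antisymm (hSeq hc).2 (hc₀min hc)
  have hRnn : 0 ≤ R := radius_nonneg hc₀S
  have hReq : R = 0 := by
    by_contra hne0
    have hpos : 0 < R := lt_of_le_of_ne hRnn (Ne.symm hne0)
    obtain ⟨t, htsub, htfin, htcover⟩ :=
      finite_cover_balls_of_compact hScompact (show (0:ℝ) < R/8 by linarith)
    haveI := htfin.fintype
    obtain ⟨x, hxS, hxsep⟩ :=
      exists_separated hsub hmop hne hpos hrad (Fintype.card t + 1)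
    have hcent : ∀ i : Fin (Fintype.card t + 1),
        ∃ c : t, x i ∈ ball (c : BCF X) (R/8) := by
      intro i
      have hx := htcover (hxS i)
      rw [mem_iUnion₂] at hx
      obtain ⟨y, hy, hmem⟩ := hx
      exact ⟨⟨y, hy⟩, hmem⟩
    choose φ hφ using hcent
    obtain ⟨i, j, hij, hphi⟩ := Fintype.exists_ne_map_eq_of_card_lt φ (by simp)
    have d1 : dist (x i) ((φ i : BCF X)) < R/8 := mem_ball.1 (hφ i)
    have d2 : dist (x j) ((φ j : BCF X)) < R/8 := mem_ball.1 (hφ j)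
    rw [hphi] at d1
    have hdij : dist (x i) (x j) < R/4 := by
      calc dist (x i) (x j)
          ≤ dist (x i) ((φ j : BCF X)) + dist (x j) ((φ j : BCF X)) :=
            dist_triangle_right _ _ _
        _ < R/8 + R/8 := add_lt_add d1 d2
        _ = R/4 := by ring
    have hsep := hxsep i j hij
    linarith
  obtain ⟨c, hcS⟩ := hne
  have hsing : ∀ c' ∈ S, c' = c := by
    intro c' hc'
    have hd : dist c' c ≤ radius S c' := dist_le_radius hcS
    rw [hrad c' hc', hReq] at hd
    exact dist_le_zero.1 hd
  exact ⟨c, hsub hcS, hsing _ (hrop c hcS), fun e => hsing _ (htop e c hcS)⟩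

lemma geo_le {c : BCF X} (hc : Ok c) (x y : X) {s t : Set.Icc (0:ℝ) 1} (hst : s.1 ≤ t.1) :
    (t.1 - s.1) * dist x y ≤ dist (c (x, y, s)) (c (x, y, t)) := by
  have e0 : dist x (c (x, y, s)) ≤ s.1 * dist x y := by
    have hh := hc.2.2.1 x y i0 s
    rw [hc.1 x y] at hh
    have habs : |(i0 : Set.Icc (0:ℝ) 1).1 - s.1| = s.1 := by
      show |0 - s.1| = s.1
      rw [zero_sub, abs_neg, abs_of_nonneg s.2.1]
    rwa [habs] at hh
  have e1 : dist (c (x, y, t)) y ≤ (1 - t.1) * dist x y := by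
    have hh := hc.2.2.1 x y t i1
    rw [hc.2.1 x y] at hh
    have habs : |t.1 - (i1 : Set.Icc (0:ℝ) 1).1| = 1 - t.1 := by
      show |t.1 - 1| = 1 - t.1
      rw [abs_sub_comm, abs_of_nonneg (by linarith [t.2.2])]
    rwa [habs] at hh
  have htri := dist_triangle4 x (c (x, y, s)) (c (x, y, t)) y
  nlinarith [dist_nonneg (x := x) (y := y)]

lemma geo_eq {c : BCF X} (hc : Ok c) (x y : X) (s t : Set.Icc (0:ℝ) 1) :
    dist (c (x, y, s)) (c (x, y, t)) = |s.1 - t.1| * dist x y := by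
  have hub := hc.2.2.1 x y s t
  rcases le_total s.1 t.1 with hst | hst
  · have hlb := geo_le hc x y hst
    have habs : |s.1 - t.1| = t.1 - s.1 := by
      rw [abs_sub_comm]
      exact abs_of_nonneg (by linarith)
    rw [habs] at hub ⊢
    linarith
  · have hlb := geo_le hc x y hst
    rw [dist_comm (c (x, y, t)) (c (x, y, s))] at hlb
    have habs : |s.1 - t.1| = s.1 - t.1 := abs_of_nonneg (by linarith)
    rw [habs] at hub ⊢
    linarith

end main

end Lemma45

/-- **Lemma 4.5.** Every nonempty compact metric space admitting a conical geodesic bicombing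
admits an `Iso(X)`-equivariant reversible conical geodesic bicombing. -/
theorem compact_exists_isometry_equivariant_reversible_conical_bicombing
    {X : Type*} [MetricSpace X] [CompactSpace X] [Nonempty X]
    (h : ∃ σ : X → X → ℝ → X, IsGeodesicBicombing σ ∧ IsConical σ) :
    ∃ σ : X → X → ℝ → X, IsGeodesicBicombing σ ∧ IsConical σ ∧ IsReversible σ ∧
      ∀ f : X → X, Isometry f → Function.Surjective f →
        ∀ x y : X, ∀ t ∈ Set.Icc (0:ℝ) 1, f (σ x y t) = σ (f x) (f y) t := by
  obtain ⟨c, hcCC, hcrev, hceq⟩ := Lemma45.exists_invariant_point h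
  have hc : Lemma45.Ok c := hcCC
  refine ⟨fun x y t => c (x, y, Set.projIcc 0 1 zero_le_one t), ⟨?_, ?_, ?_⟩, ?_, ?_, ?_⟩
  · intro x y
    beta_reduce
    rw [Set.projIcc_left]
    exact hc.1 x y
  · intro x y
    beta_reduce
    rw [Set.projIcc_right]
    exact hc.2.1 x y
  · intro x y s hs t ht
    beta_reduce
    rw [Set.projIcc_of_mem zero_le_one hs, Set.projIcc_of_mem zero_le_one ht]
    exact Lemma45.geo_eq hc x y ⟨s, hs⟩ ⟨t, ht⟩
  · intro x y x' y' t ht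
    beta_reduce
    rw [Set.projIcc_of_mem zero_le_one ht]
    exact hc.2.2.2 x y x' y' ⟨t, ht⟩
  · intro x y t ht
    have h1t : (1 - t) ∈ Set.Icc (0:ℝ) 1 := ⟨by linarith [ht.2], by linarith [ht.1]⟩
    beta_reduce
    rw [Set.projIcc_of_mem zero_le_one ht, Set.projIcc_of_mem zero_le_one h1t]
    have hpt := congrArg (fun g : Lemma45.BCF X => g (x, y, ⟨t, ht⟩)) hcrev
    have hpt' : c (y, x, Lemma45.irev ⟨t, ht⟩) = c (x, y, ⟨t, ht⟩) := hpt
    exact hpt'.symm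
  · intro f hf hsurj x y t ht
    have hbij : Function.Bijective f := ⟨hf.injective, hsurj⟩
    let e : X ≃ᵢ X := ⟨Equiv.ofBijective f hbij, hf⟩
    beta_reduce
    rw [Set.projIcc_of_mem zero_le_one ht]
    have hpt := congrArg (fun g : Lemma45.BCF X => g (x, y, ⟨t, ht⟩)) (hceq e)
    have h2 : e.symm (c (e x, e y, ⟨t, ht⟩)) = c (x, y, ⟨t, ht⟩) := hpt
    show e (c (x, y, ⟨t, ht⟩)) = c (e x, e y, ⟨t, ht⟩)
    rw [← h2, IsometryEquiv.apply_symm_apply]
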